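/- Let A < B be reals, τ(s) = √((s−A)(B−s)) for s ∈ [A,B], and b(z) = √(z−A)·√(z−B) for z ∉ [A,B] (principal branches as above). Then for every z in the upper half plane, ∫_A^B τ(s)/(s−z) ds = π·((A+B)/2 − z + b(z)). -/

import Mathlib

open MeasureTheory Complex
open MeasureTheory Complex

private lemma sq_half_cpow {u : ℂ} (hu : u ≠ 0) :
    u ^ ((1:ℂ)/2) * u ^ ((1:ℂ)/2) = u := by
  rw [← Complex.cpow_add _ _ hu]
  norm_num

private lemma half_cpow_upper {u : ℂ} (hu : 0 < u.im) :
    0 < (u ^ ((1:ℂ)/2)).re ∧ 0 < (u ^ ((1:ℂ)/2)).im := by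
  have hne : u ≠ 0 := by
    intro h; rw [h] at hu; simp at hu
  have h1 : 0 < u.arg := by
    rcases lt_or_eq_of_le (Complex.arg_nonneg_iff.2 hu.le) with h | h
    · exact h
    · exact absurd ((Complex.arg_eq_zero_iff.1 h.symm).2) hu.ne'
  have h2 : u.arg < Real.pi := by
    rcases lt_or_eq_of_le (Complex.arg_le_pi u) with h | h
    · exact h
    · exact absurd ((Complex.arg_eq_pi_iff.1 h).2) hu.ne'
  rw [Complex.cpow_def_of_ne_zero hne]
  have him : (Complex.log u * ((1:ℂ)/2)).im = u.arg / 2 := by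
    simp [Complex.mul_im, Complex.log_im]; ring
  have hpi := Real.pi_pos
  constructor
  · rw [Complex.exp_re, him]
    have : 0 < Real.cos (u.arg / 2) :=
      Real.cos_pos_of_mem_Ioo ⟨by linarith, by linarith⟩
    positivity
  · rw [Complex.exp_im, him]
    have : 0 < Real.sin (u.arg / 2) :=
      Real.sin_pos_of_pos_of_lt_pi (by linarith) (by linarith)
    positivity

private lemma half_cpow_lower {u : ℂ} (hu : u.im < 0) :
    0 < (u ^ ((1:ℂ)/2)).re ∧ (u ^ ((1:ℂ)/2)).im < 0 := by
  have hne : u ≠ 0 := by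
    intro h; rw [h] at hu; simp at hu
  have h1 : u.arg < 0 := Complex.arg_neg_iff.2 hu
  have h2 : -Real.pi < u.arg := Complex.neg_pi_lt_arg u
  rw [Complex.cpow_def_of_ne_zero hne]
  have him : (Complex.log u * ((1:ℂ)/2)).im = u.arg / 2 := by
    simp [Complex.mul_im, Complex.log_im]; ring
  have hpi := Real.pi_pos
  constructor
  · rw [Complex.exp_re, him]
    have : 0 < Real.cos (u.arg / 2) :=
      Real.cos_pos_of_mem_Ioo ⟨by linarith, by linarith⟩
    positivity
  · rw [Complex.exp_im, him]
    have hs : Real.sin (u.arg / 2) < 0 :=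
      Real.sin_neg_of_neg_of_neg_pi_lt (by linarith) (by linarith)
    have he : 0 < Real.exp ((Complex.log u * ((1:ℂ)/2)).re) := Real.exp_pos _
    nlinarith

private lemma eq_of_sq_im_pos {X Y : ℂ} (h2 : X * X = Y * Y)
    (hX : 0 < X.im) (hY : 0 < Y.im) : X = Y := by
  have : (X - Y) * (X + Y) = 0 := by ring_nf; linear_combination h2
  rcases mul_eq_zero.1 this with h | h
  · exact sub_eq_zero.1 h
  · exfalso
    have : X = -Y := by linear_combination h
    rw [this] at hX
    simp at hX
    linarith

private noncomputable def Gfun (b₀ u : ℂ) (θ : ℝ) : ℂ :=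
  b₀⁻¹ * (-Complex.I * Complex.log (1 - Complex.exp (θ * Complex.I) / u) - θ
          + Complex.I * Complex.log (1 - Complex.exp (-(θ * Complex.I)) / u))

private lemma re_pos_one_sub {x : ℂ} (hx : ‖x‖ < 1) : 0 < (1 - x).re := by
  have := Complex.re_le_norm x
  simp only [Complex.sub_re, Complex.one_re]
  linarith

private lemma Gfun_deriv (b₀ u w : ℂ) (hb : b₀ ≠ 0) (hu0 : u ≠ 0)
    (hu : 1 < ‖u‖)
    (hu2 : u * (w - b₀) = 1) (huw : u = w + b₀) (θ : ℝ)
    (hcos : (Real.cos θ : ℂ) - w ≠ 0) :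
    HasDerivAt (Gfun b₀ u) (((Real.cos θ : ℂ) - w)⁻¹) θ := by
  set E : ℂ := Complex.exp (θ * Complex.I) with hE
  set E' : ℂ := Complex.exp (-(θ * Complex.I)) with hE'
  have habsE : ‖E‖ = 1 := by
    rw [hE]; exact Complex.norm_exp_ofReal_mul_I θ
  have habsE' : ‖E'‖ = 1 := by
    rw [hE', Complex.exp_neg, norm_inv, habsE, inv_one]
  have hEu : ‖E / u‖ < 1 := by
    rw [norm_div, habsE]
    rw [div_lt_one (lt_trans one_pos hu)] at *
    simpa using hu
  have hE'u : ‖E' / u‖ < 1 := by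
    rw [norm_div, habsE']
    rw [div_lt_one (lt_trans one_pos hu)]
    exact hu
  have hs1 : (1 - E / u) ∈ Complex.slitPlane := Or.inl (re_pos_one_sub hEu)
  have hs2 : (1 - E' / u) ∈ Complex.slitPlane := Or.inl (re_pos_one_sub hE'u)
  have hne1 : (1 - E / u) ≠ 0 := Complex.slitPlane_ne_zero hs1
  have hne2 : (1 - E' / u) ≠ 0 := Complex.slitPlane_ne_zero hs2
  -- derivative of θ ↦ θ * I
  have hlin : HasDerivAt (fun x : ℝ => (x : ℂ) * Complex.I) Complex.I θ := by
    simpa using (Complex.ofRealCLM.hasDerivAt (x := θ)).mul_const Complex.I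
  have hexp1 : HasDerivAt (fun x : ℝ => Complex.exp (x * Complex.I)) (E * Complex.I) θ :=
    hlin.cexp
  have hexp2 : HasDerivAt (fun x : ℝ => Complex.exp (-(x * Complex.I))) (E' * -Complex.I) θ := by
    simpa using hlin.neg.cexp
  have hin1 : HasDerivAt (fun x : ℝ => 1 - Complex.exp (x * Complex.I) / u)
      (-(E * Complex.I / u)) θ := by
    simpa using ((hexp1.div_const u).const_sub 1)
  have hin2 : HasDerivAt (fun x : ℝ => 1 - Complex.exp (-(x * Complex.I)) / u)
      (-(E' * -Complex.I / u)) θ := by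
    simpa using ((hexp2.div_const u).const_sub 1)
  have hlog1 : HasDerivAt (fun x : ℝ => Complex.log (1 - Complex.exp (x * Complex.I) / u))
      (-(E * Complex.I / u) / (1 - E / u)) θ := hin1.clog_real hs1
  have hlog2 : HasDerivAt (fun x : ℝ => Complex.log (1 - Complex.exp (-(x * Complex.I)) / u))
      (-(E' * -Complex.I / u) / (1 - E' / u)) θ := hin2.clog_real hs2
  have hth : HasDerivAt (fun x : ℝ => (x : ℂ)) 1 θ := by
    simpa using (hasDerivAt_id θ).ofReal_comp
  have hD : HasDerivAt (Gfun b₀ u)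
      (b₀⁻¹ * (-Complex.I * (-(E * Complex.I / u) / (1 - E / u)) - 1
        + Complex.I * (-(E' * -Complex.I / u) / (1 - E' / u)))) θ := by
    unfold Gfun
    exact ((((hlog1.const_mul (-Complex.I)).sub hth).add
      (hlog2.const_mul Complex.I)).const_mul b₀⁻¹)
  convert hD using 1
  -- algebra: show (cos θ - w)⁻¹ equals the raw derivative
  have hEE' : E * E' = 1 := by
    rw [hE, hE', ← Complex.exp_add]; simp
  have hcosE : (Real.cos θ : ℂ) = (E + E') / 2 := by
    rw [Complex.ofReal_cos, Complex.cos, hE, hE']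
    ring_nf
  have hE0 : E ≠ 0 := Complex.exp_ne_zero _
  have hE'inv : E' = E⁻¹ := by rw [hE', hE, Complex.exp_neg]
  have hinv : u⁻¹ = w - b₀ := inv_eq_of_mul_eq_one_right hu2
  have hw2 : w = (u + u⁻¹) / 2 := by linear_combination (-1/2 : ℂ) * (huw + hinv)
  have hb2 : b₀ = (u - u⁻¹) / 2 := by linear_combination ((1/2 : ℂ)) * (hinv - huw)
  symm
  refine eq_inv_of_mul_eq_one_left ?_
  rw [hcosE, hE'inv, hw2]
  have hbne : (u - u⁻¹) / 2 ≠ 0 := hb2 ▸ hb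
  have hu1 : u - u⁻¹ ≠ 0 := by
    intro h; exact hbne (by rw [h]; simp)
  rw [hE'inv] at hne2
  have hB : u - E ≠ 0 := by
    intro h
    apply hne1
    have : u = E := by linear_combination h
    rw [this]
    field_simp
    norm_num
  have hA : u * E - 1 ≠ 0 := by
    intro h
    apply hne2
    have h' : E * u = 1 := by linear_combination h
    rw [inv_eq_of_mul_eq_one_right h']
    field_simp
    norm_num
  have d1 : 1 - E/u = (u - E)/u := by field_simp
  have d2 : 1 - E⁻¹/u = (u*E - 1)/(u*E) := by
    field_simp
  have n1 : -Complex.I * (-(E * Complex.I / u) / (1 - E / u)) = -E / (u - E) := by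
    rw [d1, mul_div_assoc']
    have h9 : -Complex.I * -(E * Complex.I / u) = -E/u := by
      linear_combination (E/u) * Complex.I_mul_I
    rw [h9, div_div_div_comm, div_self hu0, div_one]
  have n2 : Complex.I * (-(E⁻¹ * -Complex.I / u) / (1 - E⁻¹ / u)) = -1 / (u*E - 1) := by
    rw [d2, mul_div_assoc']
    have h9 : Complex.I * -(E⁻¹ * -Complex.I / u) = -1/(E*u) := by
      have h8 : E⁻¹ = 1/E := by rw [one_div]
      rw [h8]
      field_simp
      exact Complex.I_sq
    rw [h9]
    have h8 : E * u = u * E := by ring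
    rw [h8, div_div_div_comm, div_self (mul_ne_zero hu0 hE0), div_one]
  rw [n1, n2]
  -- goal : b₀⁻¹ * (-E/(u-E) - 1 + -1/(u*E-1)) * ((E+E⁻¹)/2 - (u+u⁻¹)/2) = 1
  have hXC : (-E/(u-E) - 1 + -1/(u*E-1)) * ((E+E⁻¹)/2 - (u+u⁻¹)/2) = b₀ := by
    rw [hb2]
    have hA' : E * u - 1 ≠ 0 := by rwa [mul_comm]
    field_simp
    ring
  calc b₀⁻¹ * (-E/(u-E) - 1 + -1/(u*E-1)) * ((E+E⁻¹)/2 - (u+u⁻¹)/2)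
      = b₀⁻¹ * ((-E/(u-E) - 1 + -1/(u*E-1)) * ((E+E⁻¹)/2 - (u+u⁻¹)/2)) := by ring
    _ = b₀⁻¹ * b₀ := by rw [hXC]
    _ = 1 := inv_mul_cancel₀ hb

/-- Stieltjes transform of the semicircle-type density `τ(s) = √((s−A)(B−s))` on `[A,B]`:
for `Im z > 0`, `∫_A^B τ(s)/(s−z) ds = π·((A+B)/2 − z + b(z))` where
`b(z) = √(z−A)·√(z−B)` (principal branches). -/
theorem stieltjes_semicircle (A B : ℝ) (hAB : A < B) (z : ℂ) (hz : 0 < z.im) :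
    (∫ s in A..B, (Real.sqrt ((s - A) * (B - s)) : ℂ) / ((s : ℂ) - z)) =
      (Real.pi : ℂ) * (((A : ℂ) + (B : ℂ)) / 2 - z +
        (z - (A : ℂ)) ^ ((1 : ℂ) / 2) * (z - (B : ℂ)) ^ ((1 : ℂ) / 2)) := by
  obtain ⟨r, hrdef⟩ : ∃ r : ℝ, r = (B - A) / 2 := ⟨_, rfl⟩
  obtain ⟨c, hcdef⟩ : ∃ c : ℝ, c = (A + B) / 2 := ⟨_, rfl⟩
  have hr0 : (0:ℝ) < r := by rw [hrdef]; linarith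
  have hrC : (r : ℂ) ≠ 0 := by simpa using ne_of_gt hr0
  obtain ⟨w, hwdef⟩ : ∃ w : ℂ, w = ((c : ℂ) - z) / (r : ℂ) := ⟨_, rfl⟩
  have hwim : w.im < 0 := by
    rw [hwdef, Complex.div_ofReal_im]
    simp only [Complex.sub_im, Complex.ofReal_im]
    exact div_neg_of_neg_of_pos (by linarith) hr0
  have hrw : (r : ℂ) * w = (c : ℂ) - z := by
    rw [hwdef]; field_simp
  have hcrAr : c - r = A := by rw [hrdef, hcdef]; ring
  have hcrBr : c + r = B := by rw [hrdef, hcdef]; ring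
  have hcrA : (c : ℂ) - r = (A : ℂ) := by rw [← hcrAr]; push_cast; ring
  have hcrB : (c : ℂ) + r = (B : ℂ) := by rw [← hcrBr]; push_cast; ring
  have hw1 : (r : ℂ) * (w - 1) = (A : ℂ) - z := by
    rw [mul_sub, hrw, mul_one, ← hcrA]; ring
  have hw2 : (r : ℂ) * (w + 1) = (B : ℂ) - z := by
    rw [mul_add, hrw, mul_one, ← hcrB]; ring
  have hw1im : (w - 1).im < 0 := by simpa using hwim
  have hw2im : (w + 1).im < 0 := by simpa using hwim
  obtain ⟨p, hpdef⟩ : ∃ p : ℂ, p = (w - 1) ^ ((1:ℂ)/2) := ⟨_, rfl⟩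
  obtain ⟨q, hqdef⟩ : ∃ q : ℂ, q = (w + 1) ^ ((1:ℂ)/2) := ⟨_, rfl⟩
  have hpre : 0 < p.re := hpdef ▸ (half_cpow_lower hw1im).1
  have hpim : p.im < 0 := hpdef ▸ (half_cpow_lower hw1im).2
  have hqre : 0 < q.re := hqdef ▸ (half_cpow_lower hw2im).1
  have hqim : q.im < 0 := hqdef ▸ (half_cpow_lower hw2im).2
  obtain ⟨b₀, hbdef⟩ : ∃ b₀ : ℂ, b₀ = p * q := ⟨_, rfl⟩
  have hbim : b₀.im < 0 := by
    rw [hbdef, Complex.mul_im]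
    nlinarith
  have hb0 : b₀ ≠ 0 := by
    intro h; rw [h] at hbim; simp at hbim
  have hw1ne : w - 1 ≠ 0 := by
    intro h; rw [h] at hw1im; simp at hw1im
  have hw2ne : w + 1 ≠ 0 := by
    intro h; rw [h] at hw2im; simp at hw2im
  have hbsq : b₀ * b₀ = (w - 1) * (w + 1) := by
    rw [hbdef, mul_mul_mul_comm, hpdef, hqdef, sq_half_cpow hw1ne, sq_half_cpow hw2ne]
  obtain ⟨u, hudef⟩ : ∃ u : ℂ, u = w + b₀ := ⟨_, rfl⟩
  have huim : u.im < 0 := by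
    rw [hudef]; simp only [Complex.add_im]; linarith
  have hu0 : u ≠ 0 := by
    intro h; rw [h] at huim; simp at huim
  have hu2 : u * (w - b₀) = 1 := by
    rw [hudef]; linear_combination -hbsq
  have habs : 1 < ‖u‖ := by
    have hinv : u⁻¹ = w - b₀ := inv_eq_of_mul_eq_one_right hu2
    have hiv : (u⁻¹).im = -u.im / Complex.normSq u := Complex.inv_im u
    rw [hinv] at hiv
    have hN : 0 < Complex.normSq u := Complex.normSq_pos.2 hu0
    have him : (w - b₀).im = w.im - b₀.im := by simp
    have hui : u.im = w.im + b₀.im := by rw [hudef]; simp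
    have hNlt : 1 < Complex.normSq u := by
      rw [him, hui] at hiv
      have h9 : (w.im - b₀.im) * Complex.normSq u = -(w.im + b₀.im) := by
        field_simp at hiv
        linarith [hiv]
      nlinarith
    nlinarith [Complex.sq_norm u, norm_nonneg u]
  have hcosne : ∀ θ : ℝ, (Real.cos θ : ℂ) - w ≠ 0 := by
    intro θ h
    have h5 : ((Real.cos θ : ℂ) - w).im = 0 := by rw [h]; simp
    simp only [Complex.sub_im, Complex.ofReal_im] at h5
    linarith
  -- the integrand after substitution
  obtain ⟨h, hhdef⟩ : ∃ h : ℝ → ℂ, h = fun θ =>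
      ((r : ℂ) * (Real.sin θ : ℂ)) * ((r : ℂ) * (Real.sin θ : ℂ)) /
        ((((c : ℝ) - r * Real.cos θ : ℝ) : ℂ) - z) := ⟨_, rfl⟩
  -- antiderivative
  obtain ⟨F, hFdef⟩ : ∃ F : ℝ → ℂ, F = fun θ =>
      (r : ℂ) * (Real.sin θ : ℂ) + (r : ℂ) * w * (θ : ℂ)
        - (r : ℂ) * (1 - w * w) * Gfun b₀ u θ := ⟨_, rfl⟩
  have hdenom : ∀ θ : ℝ, (((c : ℝ) - r * Real.cos θ : ℝ) : ℂ) - z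
      = -(r : ℂ) * ((Real.cos θ : ℂ) - w) := by
    intro θ
    push_cast [Complex.ofReal_cos] at *
    linear_combination -hrw
  have hdne : ∀ θ : ℝ, (((c : ℝ) - r * Real.cos θ : ℝ) : ℂ) - z ≠ 0 := by
    intro θ
    rw [hdenom θ]
    exact mul_ne_zero (neg_ne_zero.2 hrC) (hcosne θ)
  have hF' : ∀ θ : ℝ, HasDerivAt F (h θ) θ := by
    intro θ
    have h1 : HasDerivAt (fun x : ℝ => (r : ℂ) * (Real.sin x : ℂ))
        ((r : ℂ) * (Real.cos θ : ℂ)) θ :=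
      ((Real.hasDerivAt_sin θ).ofReal_comp).const_mul (r : ℂ)
    have h2 : HasDerivAt (fun x : ℝ => (r : ℂ) * w * (x : ℂ)) ((r : ℂ) * w) θ := by
      simpa using (((hasDerivAt_id θ).ofReal_comp).const_mul ((r : ℂ) * w))
    have h3 : HasDerivAt (fun x : ℝ => (r : ℂ) * (1 - w * w) * Gfun b₀ u x)
        ((r : ℂ) * (1 - w * w) * ((Real.cos θ : ℂ) - w)⁻¹) θ :=
      (Gfun_deriv b₀ u w hb0 hu0 habs hu2 hudef θ (hcosne θ)).const_mul _
    have hD := (h1.add h2).sub h3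
    rw [hFdef]
    convert hD using 1
    · rfl
    · rfl
    rw [hhdef]
    simp only []
    rw [hdenom θ]
    have hsc : (Real.sin θ : ℂ) ^ 2 + (Real.cos θ : ℂ) ^ 2 = 1 := by
      push_cast
      exact Complex.sin_sq_add_cos_sq ↑θ
    have hcw : (Real.cos θ : ℂ) - w ≠ 0 := hcosne θ
    obtain ⟨S, hS⟩ : ∃ S : ℂ, S = (Real.sin θ : ℂ) := ⟨_, rfl⟩
    obtain ⟨C, hC⟩ : ∃ C : ℂ, C = (Real.cos θ : ℂ) := ⟨_, rfl⟩
    rw [← hS] at hsc ⊢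
    rw [← hC] at hsc hcw ⊢
    field_simp
    linear_combination (-1 : ℂ) * hsc
  have hhcont : Continuous h := by
    rw [hhdef]
    apply Continuous.div
    · fun_prop
    · fun_prop
    · exact fun θ => hdne θ
  have hFTC : (∫ θ in (0:ℝ)..Real.pi, h θ) = F Real.pi - F 0 :=
    intervalIntegral.integral_eq_sub_of_hasDerivAt (fun θ _ => hF' θ)
      (hhcont.intervalIntegrable 0 Real.pi)
  -- substitution
  obtain ⟨f, hfdef⟩ : ∃ f : ℝ → ℂ,
      f = fun s => ((Real.sqrt ((s - A) * (B - s)) : ℝ) : ℂ) / ((s : ℂ) - z) := ⟨_, rfl⟩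
  have hfcont : Continuous f := by
    rw [hfdef]
    apply Continuous.div
    · fun_prop
    · fun_prop
    · intro s h9
      have h5 : ((s:ℂ) - z).im = 0 := by rw [h9]; simp
      simp only [Complex.sub_im, Complex.ofReal_im] at h5
      linarith
  have hsub : (∫ x in (0:ℝ)..Real.pi, (r * Real.sin x) • f (c - r * Real.cos x))
      = ∫ s in A..B, f s := by
    have hg : ∀ x ∈ Set.uIcc (0:ℝ) Real.pi,
        HasDerivAt (fun x : ℝ => c - r * Real.cos x) (r * Real.sin x) x := by
      intro x _
      simpa using ((Real.hasDerivAt_cos x).const_mul r).const_sub c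
    have h7 := intervalIntegral.integral_comp_smul_deriv hg
      (by fun_prop : Continuous fun x : ℝ => r * Real.sin x).continuousOn hfcont
    simp only [Function.comp] at h7
    rw [h7, Real.cos_zero, Real.cos_pi]
    rw [show c - r * 1 = A by linarith [hcrAr], show c - r * (-1) = B by linarith [hcrBr]]
  have hcongr : ∀ x ∈ Set.uIcc (0:ℝ) Real.pi,
      (r * Real.sin x) • f (c - r * Real.cos x) = h x := by
    intro x hx
    rw [Set.uIcc_of_le Real.pi_pos.le] at hx
    have hsin : 0 ≤ Real.sin x := Real.sin_nonneg_of_nonneg_of_le_pi hx.1 hx.2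
    have hsqrt : Real.sqrt ((c - r * Real.cos x - A) * (B - (c - r * Real.cos x)))
        = r * Real.sin x := by
      have he : (c - r * Real.cos x - A) * (B - (c - r * Real.cos x))
          = (r * Real.sin x) ^ 2 := by
        have h9 := Real.sin_sq_add_cos_sq x
        rw [← hcrAr, ← hcrBr]
        linear_combination (-(r^2)) * h9
      rw [he, Real.sqrt_sq (by positivity)]
    rw [hfdef, hhdef]
    simp only [Complex.real_smul]
    rw [hsqrt]
    push_cast
    ring
  -- endpoint values
  have hG0 : Gfun b₀ u 0 = 0 := by
    unfold Gfun
    simp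
  have hGpi : Gfun b₀ u Real.pi = b₀⁻¹ * (-(Real.pi : ℂ)) := by
    unfold Gfun
    rw [Complex.exp_neg, Complex.exp_pi_mul_I]
    ring_nf
  -- the square-root identity
  have hzA : 0 < (z - (A:ℂ)).im := by simp [hz]
  have hzB : 0 < (z - (B:ℂ)).im := by simp [hz]
  have hzAne : z - (A:ℂ) ≠ 0 := by
    intro h9; rw [h9] at hzA; simp at hzA
  have hzBne : z - (B:ℂ) ≠ 0 := by
    intro h9; rw [h9] at hzB; simp at hzB
  have hX : (z - (A:ℂ)) ^ ((1:ℂ)/2) * (z - (B:ℂ)) ^ ((1:ℂ)/2) = -(r:ℂ) * b₀ := by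
    obtain ⟨hare, haim⟩ := half_cpow_upper hzA
    obtain ⟨hbre', hbim'⟩ := half_cpow_upper hzB
    apply eq_of_sq_im_pos
    · rw [mul_mul_mul_comm, sq_half_cpow hzAne, sq_half_cpow hzBne]
      have h9 : (-(r:ℂ) * b₀) * (-(r:ℂ) * b₀) = ((r:ℂ)*(w-1)) * ((r:ℂ)*(w+1)) := by
        rw [mul_mul_mul_comm ((r:ℂ)) (w-1), ← hbsq]; ring
      rw [h9, hw1, hw2]
      ring
    · rw [Complex.mul_im]
      nlinarith
    · have h9 : (-(r:ℂ) * b₀).im = -r * b₀.im := by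
        simp [Complex.mul_im]
      rw [h9]
      nlinarith
  -- assemble
  calc (∫ s in A..B, ((Real.sqrt ((s - A) * (B - s)) : ℝ) : ℂ) / ((s : ℂ) - z))
      = ∫ s in A..B, f s := by rw [hfdef]
    _ = ∫ x in (0:ℝ)..Real.pi, (r * Real.sin x) • f (c - r * Real.cos x) := hsub.symm
    _ = ∫ θ in (0:ℝ)..Real.pi, h θ := intervalIntegral.integral_congr hcongr
    _ = F Real.pi - F 0 := hFTC
    _ = (r:ℂ) * w * Real.pi + (r:ℂ) * (1 - w*w) * (b₀⁻¹ * (Real.pi:ℂ)) := by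
        rw [hFdef]
        norm_num [Real.sin_pi, Real.sin_zero, hG0, hGpi]
    _ = (Real.pi : ℂ) * (((A : ℂ) + (B : ℂ)) / 2 - z +
        (z - (A:ℂ)) ^ ((1:ℂ)/2) * (z - (B:ℂ)) ^ ((1:ℂ)/2)) := by
        rw [hX]
        have h9 : (1 - w*w) * b₀⁻¹ = -b₀ := by
          have h8 : (1:ℂ) - w*w = -(b₀*b₀) := by rw [hbsq]; ring
          rw [h8]
          field_simp
        have hAB2 : ((A:ℂ) + (B:ℂ)) / 2 = (c:ℂ) := by
          rw [← hcrA, ← hcrB]; ring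
        rw [hAB2]
        linear_combination ((r:ℂ)*(Real.pi:ℂ))*h9 + (Real.pi:ℂ)*hrw
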